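/- Let L ∈ ℝ^{m×k} and R ∈ ℝ^{k×n}, and let T : ℝ^{m×k} × ℝ^{k×n} → ℝ^{m×n} be the linear map T(L̇, Ṙ) = L̇R + LṘ, where all three matrix spaces carry the Frobenius inner product. Then the multiset of eigenvalues of the positive semidefinite operator T ∘ T* on ℝ^{m×n} equals { σ_i(L)² + σ_j(R)² : 1 ≤ i ≤ m, 1 ≤ j ≤ n }, where σ_i(L) denotes the i-th largest singular value of L with the convention that σ_i(L) = 0 for i > k, and likewise σ_j(R) = 0 for j > k. -/

import Mathlib

/-- The `i`-th largest singular value (1-indexed) of a real matrix, via the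
Courant–Fischer max-min characterisation; by convention it is `0` when `i` exceeds
the number of rows or columns. -/
noncomputable def sval {α β : Type*} [Fintype α] [Fintype β] [DecidableEq β]
    (A : Matrix α β ℝ) (i : ℕ) : ℝ :=
  sSup {t : ℝ | ∃ V : Submodule ℝ (EuclideanSpace ℝ β), Module.finrank ℝ V = i ∧
    ∀ v ∈ V, t * ‖v‖ ≤ ‖Matrix.toEuclideanLin A v‖}

/-- The Frobenius inner product of two real matrices. -/
def finner {α β : Type*} [Fintype α] [Fintype β] (A B : Matrix α β ℝ) : ℝ :=
  ∑ i, ∑ j, A i j * B i j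


open Matrix Module Submodule Finset RealInnerProductSpace

noncomputable section
namespace Stmt8Aux

variable {N : ℕ}

lemma toEuclideanLin_mul {a b c : Type*} [Fintype a] [Fintype b] [Fintype c]
    [DecidableEq b] [DecidableEq c]
    (M : Matrix a b ℝ) (P : Matrix b c ℝ) (v : EuclideanSpace ℝ c) :
    Matrix.toEuclideanLin (M * P) v = Matrix.toEuclideanLin M (Matrix.toEuclideanLin P v) := by
  simp [Matrix.toEuclideanLin_apply, Matrix.mulVec_mulVec]

lemma norm_toEuclideanLin_sq {a b : Type*} [Fintype a] [Fintype b] [DecidableEq a] [DecidableEq b]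
    (A : Matrix a b ℝ) (v : EuclideanSpace ℝ b) :
    ‖Matrix.toEuclideanLin A v‖ ^ 2 = ⟪v, Matrix.toEuclideanLin (Aᴴ * A) v⟫ := by
  rw [toEuclideanLin_mul, Matrix.toEuclideanLin_conjTranspose_eq_adjoint,
    LinearMap.adjoint_inner_right, real_inner_self_eq_norm_sq]

lemma inner_toEuclideanLin_conjTranspose {a b : Type*} [Fintype a] [Fintype b]
    [DecidableEq a] [DecidableEq b]
    (A : Matrix a b ℝ) (w : EuclideanSpace ℝ a) (u : EuclideanSpace ℝ b) :
    ⟪Matrix.toEuclideanLin Aᴴ w, u⟫ = ⟪w, Matrix.toEuclideanLin A u⟫ := by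
  rw [Matrix.toEuclideanLin_conjTranspose_eq_adjoint, LinearMap.adjoint_inner_left]

lemma eigen_toEuclideanLin {H : Matrix (Fin N) (Fin N) ℝ} (hH : H.IsHermitian) (j : Fin N) :
    Matrix.toEuclideanLin H (hH.eigenvectorBasis j)
      = hH.eigenvalues j • hH.eigenvectorBasis j := by
  rw [Matrix.toEuclideanLin_apply]
  apply (WithLp.equiv 2 _).injective
  simp [Matrix.IsHermitian.mulVec_eigenvectorBasis]

variable {N : ℕ} (g : OrthonormalBasis (Fin N) ℝ (EuclideanSpace ℝ (Fin N)))

lemma inner_eq_sum_repr (v w : EuclideanSpace ℝ (Fin N)) :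
    ⟪v, w⟫ = ∑ j, g.repr v j * g.repr w j := by
  conv_lhs => rw [← g.sum_repr v, ← g.sum_repr w]
  rw [g.orthonormal.inner_sum]
  simp

lemma norm_sq_eq_sum_repr (v : EuclideanSpace ℝ (Fin N)) :
    ‖v‖ ^ 2 = ∑ j, g.repr v j ^ 2 := by
  rw [← real_inner_self_eq_norm_sq, inner_eq_sum_repr g]
  simp [sq]

lemma repr_eq_zero_of_mem_span {s : Set (Fin N)} {v : EuclideanSpace ℝ (Fin N)}
    (hv : v ∈ span ℝ (g '' s)) {j : Fin N} (hj : j ∉ s) : g.repr v j = 0 := by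
  induction hv using Submodule.span_induction with
  | mem x hx =>
    obtain ⟨i, hi, rfl⟩ := hx
    have : i ≠ j := fun h => hj (h ▸ hi)
    simp [OrthonormalBasis.repr_self, EuclideanSpace.single_apply, this.symm]
  | zero => simp
  | add x y _ _ hx hy => simp [hx, hy]
  | smul a x _ hx => simp [hx]

lemma repr_eigen_apply {Hlin : EuclideanSpace ℝ (Fin N) →ₗ[ℝ] EuclideanSpace ℝ (Fin N)}
    {ν : Fin N → ℝ} (hH : ∀ j, Hlin (g j) = ν j • g j) (v : EuclideanSpace ℝ (Fin N))
    (j : Fin N) : g.repr (Hlin v) j = ν j * g.repr v j := by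
  have h1 : Hlin v = ∑ i, (g.repr v i * ν i) • g i := by
    conv_lhs => rw [← g.sum_repr v]
    rw [map_sum]
    simp_rw [_root_.map_smul, hH, smul_smul]
  rw [g.repr_apply_apply, h1, inner_sum]
  simp_rw [real_inner_smul_right]
  have := orthonormal_iff_ite.mp g.orthonormal
  simp [this, mul_comm]

lemma quad_eq_sum {Hlin : EuclideanSpace ℝ (Fin N) →ₗ[ℝ] EuclideanSpace ℝ (Fin N)}
    {ν : Fin N → ℝ} (hH : ∀ j, Hlin (g j) = ν j • g j) (v : EuclideanSpace ℝ (Fin N)) :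
    ⟪v, Hlin v⟫ = ∑ j, ν j * g.repr v j ^ 2 := by
  rw [inner_eq_sum_repr g]
  refine Finset.sum_congr rfl fun j _ => ?_
  rw [repr_eigen_apply g hH]
  ring

lemma quad_le_of_mem_span {Hlin : EuclideanSpace ℝ (Fin N) →ₗ[ℝ] EuclideanSpace ℝ (Fin N)}
    {ν : Fin N → ℝ} (hH : ∀ j, Hlin (g j) = ν j • g j) {s : Set (Fin N)} {c : ℝ}
    (hb : ∀ j ∈ s, ν j ≤ c) {v : EuclideanSpace ℝ (Fin N)} (hv : v ∈ span ℝ (g '' s)) :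
    ⟪v, Hlin v⟫ ≤ c * ‖v‖ ^ 2 := by
  rw [quad_eq_sum g hH, norm_sq_eq_sum_repr g, Finset.mul_sum]
  refine Finset.sum_le_sum fun j _ => ?_
  by_cases hj : j ∈ s
  · exact mul_le_mul_of_nonneg_right (hb j hj) (sq_nonneg _)
  · rw [repr_eq_zero_of_mem_span g hv hj]; simp

lemma le_quad_of_mem_span {Hlin : EuclideanSpace ℝ (Fin N) →ₗ[ℝ] EuclideanSpace ℝ (Fin N)}
    {ν : Fin N → ℝ} (hH : ∀ j, Hlin (g j) = ν j • g j) {s : Set (Fin N)} {c : ℝ}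
    (hb : ∀ j ∈ s, c ≤ ν j) {v : EuclideanSpace ℝ (Fin N)} (hv : v ∈ span ℝ (g '' s)) :
    c * ‖v‖ ^ 2 ≤ ⟪v, Hlin v⟫ := by
  rw [quad_eq_sum g hH, norm_sq_eq_sum_repr g, Finset.mul_sum]
  refine Finset.sum_le_sum fun j _ => ?_
  by_cases hj : j ∈ s
  · exact mul_le_mul_of_nonneg_right (hb j hj) (sq_nonneg _)
  · rw [repr_eq_zero_of_mem_span g hv hj]; simp

lemma finrank_span_onb_comp {ι : Type*} [Fintype ι] (f : ι → Fin N)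
    (hf : Function.Injective f) :
    finrank ℝ (span ℝ (Set.range (g ∘ f))) = Fintype.card ι :=
  finrank_span_eq_card ((g.orthonormal.comp f hf).linearIndependent)


lemma exists_antitone_perm (w : Fin N → ℝ) : ∃ σ : Equiv.Perm (Fin N), Antitone (w ∘ σ) := by
  refine ⟨(Fin.revPerm).trans (Tuple.sort w), fun a b hab => ?_⟩
  exact Tuple.monotone_sort w (Fin.rev_le_rev.mpr hab)


lemma sval_CFd {M' : ℕ} (A : Matrix (Fin M') (Fin N) ℝ)
    (σ : Equiv.Perm (Fin N))
    (hσ : Antitone ((Matrix.isHermitian_conjTranspose_mul_self A).eigenvalues ∘ σ))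
    (i : Fin N) :
    sval A (i + 1)
      = Real.sqrt ((Matrix.isHermitian_conjTranspose_mul_self A).eigenvalues (σ i)) := by
  have hH := Matrix.isHermitian_conjTranspose_mul_self A
  set g := hH.eigenvectorBasis with hg
  set ν := hH.eigenvalues with hν
  have hnn : ∀ j, 0 ≤ ν j := Matrix.eigenvalues_conjTranspose_mul_self_nonneg A
  have heig : ∀ j, Matrix.toEuclideanLin (Aᴴ * A) (g j) = ν j • g j :=
    fun j => eigen_toEuclideanLin hH j
  set d : ℝ := ν (σ i) with hd
  have hdnn : 0 ≤ d := hnn _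
  have hnorm : ∀ v, ‖Matrix.toEuclideanLin A v‖ ^ 2 = ⟪v, Matrix.toEuclideanLin (Aᴴ * A) v⟫ :=
    norm_toEuclideanLin_sq A
  have hiN : (i : ℕ) + 1 ≤ N := i.2
  -- the top subspace
  set emb1 : Fin ((i : ℕ) + 1) → Fin N := fun l => σ (Fin.castLE hiN l) with hemb1
  have hemb1inj : Function.Injective emb1 :=
    σ.injective.comp (Fin.castLE_injective hiN)
  set V₀ : Submodule ℝ (EuclideanSpace ℝ (Fin N)) := span ℝ (Set.range (g ∘ emb1)) with hV₀
  have hV₀rank : finrank ℝ V₀ = (i : ℕ) + 1 := by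
    rw [hV₀, finrank_span_onb_comp g emb1 hemb1inj, Fintype.card_fin]
  have hmem : Real.sqrt d ∈ {t : ℝ | ∃ V : Submodule ℝ (EuclideanSpace ℝ (Fin N)),
      finrank ℝ V = (i : ℕ) + 1 ∧ ∀ v ∈ V, t * ‖v‖ ≤ ‖Matrix.toEuclideanLin A v‖} := by
    refine ⟨V₀, hV₀rank, fun v hv => ?_⟩
    have hvmem : v ∈ span ℝ (g '' Set.range emb1) := by
      rwa [← Set.range_comp]
    have hq : d * ‖v‖ ^ 2 ≤ ⟪v, Matrix.toEuclideanLin (Aᴴ * A) v⟫ := by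
      refine le_quad_of_mem_span g heig (fun j hj => ?_) hvmem
      obtain ⟨l, rfl⟩ := hj
      exact hσ (by simpa [Fin.le_def] using Nat.lt_succ_iff.mp l.2)
    have h2 : (Real.sqrt d * ‖v‖) ^ 2 ≤ ‖Matrix.toEuclideanLin A v‖ ^ 2 := by
      rw [mul_pow, Real.sq_sqrt hdnn, hnorm v]; exact hq
    have := Real.sqrt_le_sqrt h2
    rwa [Real.sqrt_sq (by positivity), Real.sqrt_sq (norm_nonneg _)] at this
  have hub : ∀ t ∈ {t : ℝ | ∃ V : Submodule ℝ (EuclideanSpace ℝ (Fin N)),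
      finrank ℝ V = (i : ℕ) + 1 ∧ ∀ v ∈ V, t * ‖v‖ ≤ ‖Matrix.toEuclideanLin A v‖},
      t ≤ Real.sqrt d := by
    rintro t ⟨V, hVrank, hV⟩
    rcases le_or_gt t 0 with ht | ht
    · exact ht.trans (Real.sqrt_nonneg _)
    set emb2 : Fin (N - (i : ℕ)) → Fin N := fun l => σ ⟨(i : ℕ) + l.1, by omega⟩ with hemb2
    have hemb2inj : Function.Injective emb2 := by
      intro a b hab
      have := σ.injective hab
      have := congrArg Fin.val this
      simp only at this
      exact Fin.ext (by omega)
    set W : Submodule ℝ (EuclideanSpace ℝ (Fin N)) := span ℝ (Set.range (g ∘ emb2)) with hW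
    have hWrank : finrank ℝ W = N - (i : ℕ) := by
      rw [hW, finrank_span_onb_comp g emb2 hemb2inj, Fintype.card_fin]
    have hinf : 0 < finrank ℝ (V ⊓ W : Submodule ℝ (EuclideanSpace ℝ (Fin N))) := by
      have hsum := Submodule.finrank_sup_add_finrank_inf_eq V W
      have hle : finrank ℝ (V ⊔ W : Submodule ℝ (EuclideanSpace ℝ (Fin N))) ≤ N := by
        simpa using Submodule.finrank_le (V ⊔ W)
      omega
    obtain ⟨v, hvVW, hv0⟩ : ∃ v ∈ V ⊓ W, v ≠ 0 := by
      by_contra hcon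
      push_neg at hcon
      have : (V ⊓ W : Submodule ℝ (EuclideanSpace ℝ (Fin N))) = ⊥ :=
        (Submodule.eq_bot_iff _).mpr hcon
      rw [this, finrank_bot] at hinf
      exact lt_irrefl _ hinf
    have hvV : v ∈ V := hvVW.1
    have hvW : v ∈ span ℝ (g '' Set.range emb2) := by
      have := hvVW.2
      rwa [hW, Set.range_comp] at this
    have hq : ⟪v, Matrix.toEuclideanLin (Aᴴ * A) v⟫ ≤ d * ‖v‖ ^ 2 := by
      refine quad_le_of_mem_span g heig (fun j hj => ?_) hvW
      obtain ⟨l, rfl⟩ := hj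
      exact hσ (by simp [Fin.le_def])
    have h1 : (t * ‖v‖) ^ 2 ≤ d * ‖v‖ ^ 2 := by
      calc (t * ‖v‖) ^ 2 ≤ ‖Matrix.toEuclideanLin A v‖ ^ 2 := by
            have := hV v hvV
            have h0 : 0 ≤ t * ‖v‖ := by positivity
            exact pow_le_pow_left₀ h0 this 2
        _ = ⟪v, Matrix.toEuclideanLin (Aᴴ * A) v⟫ := hnorm v
        _ ≤ d * ‖v‖ ^ 2 := hq
    have hvpos : 0 < ‖v‖ := norm_pos_iff.mpr hv0
    have ht2 : t ^ 2 ≤ d := by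
      calc t ^ 2 = (t * ‖v‖) ^ 2 / ‖v‖ ^ 2 := by field_simp [mul_pow]
        _ ≤ d * ‖v‖ ^ 2 / ‖v‖ ^ 2 := by gcongr
        _ = d := by field_simp
    calc t = Real.sqrt (t ^ 2) := by rw [Real.sqrt_sq ht.le]
      _ ≤ Real.sqrt d := Real.sqrt_le_sqrt ht2
  show sSup _ = _
  exact le_antisymm (csSup_le ⟨_, hmem⟩ hub) (le_csSup ⟨_, hub⟩ hmem)


lemma sval_CFc {M' K : ℕ} (A : Matrix (Fin M') (Fin K) ℝ)
    (σ : Equiv.Perm (Fin M'))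
    (hσ : Antitone ((Matrix.isHermitian_mul_conjTranspose_self A).eigenvalues ∘ σ))
    (i : Fin M') :
    sval A (i + 1)
      = Real.sqrt ((Matrix.isHermitian_mul_conjTranspose_self A).eigenvalues (σ i)) := by
  have hH := Matrix.isHermitian_mul_conjTranspose_self A
  set g := hH.eigenvectorBasis with hg
  set μ := hH.eigenvalues with hμ
  have hnn : ∀ j, 0 ≤ μ j := Matrix.eigenvalues_self_mul_conjTranspose_nonneg A
  have heig : ∀ j, Matrix.toEuclideanLin (A * Aᴴ) (g j) = μ j • g j :=
    fun j => eigen_toEuclideanLin hH j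
  set d : ℝ := μ (σ i) with hd
  have hdnn : 0 ≤ d := hnn _
  have hAAs : ∀ w, Matrix.toEuclideanLin A (Matrix.toEuclideanLin Aᴴ w)
      = Matrix.toEuclideanLin (A * Aᴴ) w := fun w => (toEuclideanLin_mul A Aᴴ w).symm
  have hinner : ∀ (w : EuclideanSpace ℝ (Fin M')) (u : EuclideanSpace ℝ (Fin K)),
      ⟪Matrix.toEuclideanLin Aᴴ w, u⟫ = ⟪w, Matrix.toEuclideanLin A u⟫ :=
    inner_toEuclideanLin_conjTranspose A
  set S : Set ℝ := {t : ℝ | ∃ V : Submodule ℝ (EuclideanSpace ℝ (Fin K)),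
      finrank ℝ V = (i : ℕ) + 1 ∧ ∀ v ∈ V, t * ‖v‖ ≤ ‖Matrix.toEuclideanLin A v‖} with hS
  -- orthonormal family from positive eigenvalues
  have hON : ∀ {c : ℕ} (j1 : Fin c → Fin M'), Function.Injective j1 → (∀ l, 0 < μ (j1 l)) →
      Orthonormal ℝ (fun l => (Real.sqrt (μ (j1 l)))⁻¹ •
        Matrix.toEuclideanLin Aᴴ (g (j1 l))) := by
    intro c j1 hj1 hpos
    rw [orthonormal_iff_ite]
    intro a b
    rw [real_inner_smul_left, real_inner_smul_right, hinner, hAAs, heig,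
      real_inner_smul_right]
    rw [orthonormal_iff_ite.mp g.orthonormal]
    by_cases hab : a = b
    · subst hab
      simp only [hj1.eq_iff, if_pos rfl, if_true, mul_one]
      have h1 : Real.sqrt (μ (j1 a)) ≠ 0 := ne_of_gt (Real.sqrt_pos.mpr (hpos a))
      rw [← Real.mul_self_sqrt (hnn (j1 a))]
      field_simp
      rw [Real.sqrt_sq (Real.sqrt_nonneg _)]
    · simp [hab, hj1.eq_iff]
  have hub : ∀ t ∈ S, t ≤ Real.sqrt d := by
    rintro t ⟨V, hVrank, hV⟩
    rcases le_or_gt t 0 with ht | ht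
    · exact ht.trans (Real.sqrt_nonneg _)
    have hinj : Function.Injective ((Matrix.toEuclideanLin A).domRestrict V) := by
      rw [← LinearMap.ker_eq_bot]
      refine (Submodule.eq_bot_iff _).mpr fun x hx => ?_
      rw [LinearMap.mem_ker, LinearMap.domRestrict_apply] at hx
      have := hV x.1 x.2
      rw [hx, norm_zero] at this
      have : ‖(x : EuclideanSpace ℝ (Fin K))‖ ≤ 0 := by nlinarith
      have : (x : EuclideanSpace ℝ (Fin K)) = 0 := by
        simpa using norm_le_zero_iff.mp this
      exact Subtype.ext this
    set Vim : Submodule ℝ (EuclideanSpace ℝ (Fin M')) := V.map (Matrix.toEuclideanLin A)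
      with hVim
    have hVimrank : finrank ℝ Vim = (i : ℕ) + 1 := by
      rw [hVim, ← LinearMap.range_domRestrict]
      rw [LinearMap.finrank_range_of_inj hinj, hVrank]
    set emb2 : Fin (M' - (i : ℕ)) → Fin M' := fun l => σ ⟨(i : ℕ) + l.1, by omega⟩ with hemb2
    have hemb2inj : Function.Injective emb2 := by
      intro a b hab
      have := congrArg Fin.val (σ.injective hab)
      simp only at this
      exact Fin.ext (by omega)
    set W : Submodule ℝ (EuclideanSpace ℝ (Fin M')) := span ℝ (Set.range (g ∘ emb2)) with hW
    have hWrank : finrank ℝ W = M' - (i : ℕ) := by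
      rw [hW, finrank_span_onb_comp g emb2 hemb2inj, Fintype.card_fin]
    have hinf : 0 < finrank ℝ (Vim ⊓ W : Submodule ℝ (EuclideanSpace ℝ (Fin M'))) := by
      have hsum := Submodule.finrank_sup_add_finrank_inf_eq Vim W
      have hle : finrank ℝ (Vim ⊔ W : Submodule ℝ (EuclideanSpace ℝ (Fin M'))) ≤ M' := by
        simpa using Submodule.finrank_le (Vim ⊔ W)
      omega
    obtain ⟨w, hwVW, hw0⟩ : ∃ w ∈ Vim ⊓ W, w ≠ 0 := by
      by_contra hcon
      push_neg at hcon
      have : (Vim ⊓ W : Submodule ℝ (EuclideanSpace ℝ (Fin M'))) = ⊥ :=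
        (Submodule.eq_bot_iff _).mpr hcon
      rw [this, finrank_bot] at hinf
      exact lt_irrefl _ hinf
    obtain ⟨v, hvV, hvw⟩ := Submodule.mem_map.mp hwVW.1
    have hwW : w ∈ span ℝ (g '' Set.range emb2) := by
      have := hwVW.2
      rwa [hW, Set.range_comp] at this
    have hq : ⟪w, Matrix.toEuclideanLin (A * Aᴴ) w⟫ ≤ d * ‖w‖ ^ 2 := by
      refine quad_le_of_mem_span g heig (fun j hj => ?_) hwW
      obtain ⟨l, rfl⟩ := hj
      exact hσ (by simp [Fin.le_def])
    have hAsw : ‖Matrix.toEuclideanLin Aᴴ w‖ ≤ Real.sqrt d * ‖w‖ := by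
      have h1 : ‖Matrix.toEuclideanLin Aᴴ w‖ ^ 2 ≤ d * ‖w‖ ^ 2 := by
        rw [← real_inner_self_eq_norm_sq, hinner, hAAs]
        exact hq
      have := Real.sqrt_le_sqrt h1
      rwa [Real.sqrt_sq (norm_nonneg _), Real.sqrt_mul hdnn, Real.sqrt_sq (norm_nonneg _)]
        at this
    have hwpos : 0 < ‖w‖ := norm_pos_iff.mpr hw0
    have hkey : ‖w‖ ≤ Real.sqrt d * ‖v‖ := by
      have h1 : ‖w‖ ^ 2 = ⟪Matrix.toEuclideanLin Aᴴ w, v⟫ := by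
        rw [hinner, hvw, real_inner_self_eq_norm_sq]
      have h2 : ⟪Matrix.toEuclideanLin Aᴴ w, v⟫ ≤ ‖Matrix.toEuclideanLin Aᴴ w‖ * ‖v‖ :=
        real_inner_le_norm _ _
      have h3 : ‖w‖ ^ 2 ≤ Real.sqrt d * ‖w‖ * ‖v‖ := by
        calc ‖w‖ ^ 2 = ⟪Matrix.toEuclideanLin Aᴴ w, v⟫ := h1
          _ ≤ ‖Matrix.toEuclideanLin Aᴴ w‖ * ‖v‖ := h2
          _ ≤ Real.sqrt d * ‖w‖ * ‖v‖ :=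
              mul_le_mul_of_nonneg_right hAsw (norm_nonneg _)
      nlinarith
    have hv0 : v ≠ 0 := by
      rintro rfl
      rw [map_zero] at hvw
      exact hw0 hvw.symm
    have hvpos : 0 < ‖v‖ := norm_pos_iff.mpr hv0
    have : t * ‖v‖ ≤ Real.sqrt d * ‖v‖ := by
      calc t * ‖v‖ ≤ ‖Matrix.toEuclideanLin A v‖ := hV v hvV
        _ = ‖w‖ := by rw [hvw]
        _ ≤ Real.sqrt d * ‖v‖ := hkey
    exact le_of_mul_le_mul_right this hvpos
  have hmem_or : Real.sqrt d ∈ S ∨ (S = ∅ ∧ d = 0) := by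
    by_cases hiK : (i : ℕ) < K
    · left
      rcases eq_or_lt_of_le hdnn with hd0 | hdpos
      · -- d = 0; take span of std coordinate vectors
        set e := EuclideanSpace.basisFun (Fin K) ℝ with he
        set emb : Fin ((i : ℕ) + 1) → Fin K := Fin.castLE (by omega) with hembe
        refine ⟨span ℝ (Set.range (e ∘ emb)), ?_, fun v hv => ?_⟩
        · rw [finrank_span_onb_comp e emb (Fin.castLE_injective _), Fintype.card_fin]
        · rw [← hd0, Real.sqrt_zero, zero_mul]
          exact norm_nonneg _
      · -- d > 0: orthonormal family built from A^T applied to top eigenvectors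
        have hiM : (i : ℕ) + 1 ≤ M' := i.2
        set j1 : Fin ((i : ℕ) + 1) → Fin M' := fun l => σ (Fin.castLE hiM l) with hj1
        have hj1inj : Function.Injective j1 := σ.injective.comp (Fin.castLE_injective hiM)
        have hpos : ∀ l, 0 < μ (j1 l) := by
          intro l
          have : d ≤ μ (j1 l) := hσ (by simpa [Fin.le_def] using Nat.lt_succ_iff.mp l.2)
          linarith
        set f : Fin ((i : ℕ) + 1) → EuclideanSpace ℝ (Fin K) :=
          fun l => (Real.sqrt (μ (j1 l)))⁻¹ • Matrix.toEuclideanLin Aᴴ (g (j1 l)) with hf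
        have hONf : Orthonormal ℝ f := hON j1 hj1inj hpos
        have hAf : ∀ l, Matrix.toEuclideanLin A (f l) = Real.sqrt (μ (j1 l)) • g (j1 l) := by
          intro l
          rw [hf]
          simp only [_root_.map_smul, hAAs, heig]
          rw [smul_smul]
          congr 1
          have h1 : Real.sqrt (μ (j1 l)) ≠ 0 := ne_of_gt (Real.sqrt_pos.mpr (hpos l))
          rw [← Real.mul_self_sqrt (hnn (j1 l))]
          field_simp
          rw [Real.sqrt_sq (Real.sqrt_nonneg _)]
        refine ⟨span ℝ (Set.range f), ?_, fun v hv => ?_⟩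
        · rw [finrank_span_eq_card hONf.linearIndependent, Fintype.card_fin]
        · obtain ⟨c, rfl⟩ := (mem_span_range_iff_exists_fun ℝ).mp hv
          have hnv : ‖∑ l, c l • f l‖ ^ 2 = ∑ l, c l ^ 2 := by
            rw [← real_inner_self_eq_norm_sq, hONf.inner_sum]
            simp [sq]
          have hAv : Matrix.toEuclideanLin A (∑ l, c l • f l)
              = ∑ l, (c l * Real.sqrt (μ (j1 l))) • g (j1 l) := by
            rw [map_sum]
            simp_rw [_root_.map_smul, hAf, smul_smul]
          have hnAv : ‖Matrix.toEuclideanLin A (∑ l, c l • f l)‖ ^ 2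
              = ∑ l, c l ^ 2 * μ (j1 l) := by
            rw [hAv, ← real_inner_self_eq_norm_sq]
            have hpar := (g.orthonormal.comp j1 hj1inj).inner_sum
              (fun l => c l * Real.sqrt (μ (j1 l))) (fun l => c l * Real.sqrt (μ (j1 l)))
              Finset.univ
            simp only [Function.comp_apply] at hpar
            rw [hpar]
            refine Finset.sum_congr rfl fun l _ => ?_
            simp only [_root_.map_mul, RCLike.star_def, conj_trivial]
            rw [mul_mul_mul_comm, Real.mul_self_sqrt (hnn (j1 l))]
            ring
          have hfin : d * ‖∑ l, c l • f l‖ ^ 2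
              ≤ ‖Matrix.toEuclideanLin A (∑ l, c l • f l)‖ ^ 2 := by
            rw [hnv, hnAv, Finset.mul_sum]
            refine Finset.sum_le_sum fun l _ => ?_
            rw [mul_comm]
            refine mul_le_mul_of_nonneg_left ?_ (sq_nonneg _)
            exact hσ (by simpa [Fin.le_def] using Nat.lt_succ_iff.mp l.2)
          have h2 : (Real.sqrt d * ‖∑ l, c l • f l‖) ^ 2
              ≤ ‖Matrix.toEuclideanLin A (∑ l, c l • f l)‖ ^ 2 := by
            rw [mul_pow, Real.sq_sqrt hdnn]
            exact hfin
          have := Real.sqrt_le_sqrt h2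
          rwa [Real.sqrt_sq (by positivity), Real.sqrt_sq (norm_nonneg _)] at this
    · right
      have hSempty : S = ∅ := by
        rw [Set.eq_empty_iff_forall_notMem]
        rintro t ⟨V, hVrank, -⟩
        have : finrank ℝ V ≤ K := by
          simpa using Submodule.finrank_le V
        omega
      refine ⟨hSempty, ?_⟩
      by_contra hd0
      have hdpos : 0 < d := lt_of_le_of_ne hdnn (Ne.symm hd0)
      have hiM : (i : ℕ) + 1 ≤ M' := i.2
      set j1 : Fin ((i : ℕ) + 1) → Fin M' := fun l => σ (Fin.castLE hiM l) with hj1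
      have hj1inj : Function.Injective j1 := σ.injective.comp (Fin.castLE_injective hiM)
      have hpos : ∀ l, 0 < μ (j1 l) := by
        intro l
        have : d ≤ μ (j1 l) := hσ (by simpa [Fin.le_def] using Nat.lt_succ_iff.mp l.2)
        linarith
      have hONf := hON j1 hj1inj hpos
      have hcard := hONf.linearIndependent.fintype_card_le_finrank
      rw [Fintype.card_fin, finrank_euclideanSpace, Fintype.card_fin] at hcard
      omega
  show sSup S = _
  rcases hmem_or with hmem | ⟨hSempty, hd0⟩
  · exact le_antisymm (csSup_le ⟨_, hmem⟩ hub) (le_csSup ⟨_, hub⟩ hmem)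
  · rw [hSempty, Real.sSup_empty, hd0, Real.sqrt_zero]


lemma finrank_eigenspace_of_basis {M : Type*} [AddCommGroup M] [Module ℝ M]
    {ι : Type*} [Fintype ι] (b : Basis ι ℝ M) (f : ι → ℝ)
    (S : Module.End ℝ M) (hS : ∀ x, S (b x) = f x • b x) (t : ℝ) :
    finrank ℝ (Module.End.eigenspace S t) = Nat.card {x // f x = t} := by
  classical
  have key : ∀ (a : ι → ℝ) (x : ι), b.repr (∑ y, a y • b y) x = a x := by
    intro a x
    rw [map_sum]
    simp_rw [_root_.map_smul, Basis.repr_self]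
    rw [Finset.sum_apply']
    simp [Finsupp.single_apply]
  have hspan : Module.End.eigenspace S t
      = span ℝ (Set.range (fun x : {x // f x = t} => b x.1)) := by
    apply le_antisymm
    · intro v hv
      have hv' : S v = t • v := Module.End.mem_eigenspace_iff.mp hv
      have h1 : S v = ∑ y, (b.repr v y * f y) • b y := by
        conv_lhs => rw [← b.sum_repr v]
        rw [map_sum]
        simp_rw [_root_.map_smul, hS, smul_smul]
      have h2 : t • v = ∑ y, (t * b.repr v y) • b y := by
        conv_lhs => rw [← b.sum_repr v]
        rw [Finset.smul_sum]
        simp_rw [smul_smul]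
      have e1 : ∀ x, b.repr v x * f x = t * b.repr v x := by
        intro x
        have := congrArg (fun w => b.repr w x) hv'
        simpa only [h1, h2, key] using this
      rw [← b.sum_repr v]
      refine Submodule.sum_mem _ fun x _ => ?_
      by_cases hx : f x = t
      · exact Submodule.smul_mem _ _ (Submodule.subset_span ⟨⟨x, hx⟩, rfl⟩)
      · have hzero : b.repr v x = 0 := by
          have h3 : b.repr v x * (f x - t) = 0 := by
            have := e1 x; ring_nf; linarith [e1 x]
          rcases mul_eq_zero.mp h3 with h | h
          · exact h
          · exact absurd (by linarith : f x = t) hx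
        rw [hzero, zero_smul]
        exact Submodule.zero_mem _
    · rw [Submodule.span_le]
      rintro _ ⟨⟨x, hx⟩, rfl⟩
      exact Module.End.mem_eigenspace_iff.mpr (by rw [hS, hx])
  rw [hspan, Nat.card_eq_fintype_card]
  have hli := b.linearIndependent.comp (fun x : {x // f x = t} => x.1) Subtype.val_injective
  have h4 := finrank_span_eq_card hli
  simpa [Function.comp_def] using h4


lemma real_conjT {a b : Type*} (M : Matrix a b ℝ) : Mᴴ = Mᵀ := by
  ext i j
  simp [Matrix.conjTranspose_apply]

lemma finner_zero_left {a b : Type*} [Fintype a] [Fintype b] (B : Matrix a b ℝ) :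
    finner 0 B = 0 := by simp [finner]

lemma finner_sub_right {a b : Type*} [Fintype a] [Fintype b] (X Y Z : Matrix a b ℝ) :
    finner X (Y - Z) = finner X Y - finner X Z := by
  simp [finner, mul_sub, Finset.sum_sub_distrib]

lemma eq_of_finner_eq {a b : Type*} [Fintype a] [Fintype b] (Y Z : Matrix a b ℝ)
    (h : ∀ X, finner X Y = finner X Z) : Y = Z := by
  have h0 : finner (Y - Z) (Y - Z) = 0 := by
    rw [finner_sub_right, h (Y - Z), sub_self]
  have hentry : ∀ i j, (Y - Z) i j = 0 := by
    intro i j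
    have hnn : ∀ i ∈ Finset.univ (α := a), 0 ≤ ∑ j, (Y - Z) i j * (Y - Z) i j :=
      fun i _ => Finset.sum_nonneg fun j _ => mul_self_nonneg _
    have h2 := (Finset.sum_eq_zero_iff_of_nonneg hnn).mp h0 i (Finset.mem_univ i)
    have h3 := (Finset.sum_eq_zero_iff_of_nonneg
      (fun j _ => mul_self_nonneg ((Y - Z) i j))).mp h2 j (Finset.mem_univ j)
    exact mul_self_eq_zero.mp h3
  have : Y - Z = 0 := by
    ext i j
    exact hentry i j
  exact sub_eq_zero.mp this

lemma finner_eq_trace {a b : Type*} [Fintype a] [Fintype b]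
    (X Y : Matrix a b ℝ) : finner X Y = Matrix.trace (Xᵀ * Y) := by
  simp only [finner, Matrix.trace, Matrix.diag_apply, Matrix.mul_apply,
    Matrix.transpose_apply]
  exact Finset.sum_comm

lemma finner_mul_right {a b c : Type*} [Fintype a] [Fintype b] [Fintype c]
    (X : Matrix a b ℝ) (R : Matrix b c ℝ) (B : Matrix a c ℝ) :
    finner (X * R) B = finner X (B * Rᵀ) := by
  rw [finner_eq_trace, finner_eq_trace, Matrix.transpose_mul, Matrix.mul_assoc,
    Matrix.trace_mul_comm, ← Matrix.mul_assoc, Matrix.trace_mul_comm,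
    ← Matrix.mul_assoc]

lemma finner_mul_left {a b c : Type*} [Fintype a] [Fintype b] [Fintype c]
    (L : Matrix a b ℝ) (Y : Matrix b c ℝ) (B : Matrix a c ℝ) :
    finner (L * Y) B = finner Y (Lᵀ * B) := by
  rw [finner_eq_trace, finner_eq_trace, Matrix.transpose_mul, Matrix.mul_assoc]

lemma diagonal_mul_stdBasisMatrix {a b : Type*} [Fintype a] [Fintype b]
    [DecidableEq a] [DecidableEq b] (d : a → ℝ) (i : a) (j : b) :
    Matrix.diagonal d * Matrix.single i j (1 : ℝ)
      = d i • Matrix.single i j 1 := by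
  ext p q
  rw [Matrix.mul_apply, Finset.sum_eq_single i
    (fun x _ hx => by simp [Matrix.single, Ne.symm hx]) (by simp)]
  by_cases hp : p = i
  · subst hp
    by_cases hj : j = q <;> simp [Matrix.single, Matrix.diagonal_apply, hj]
  · have hp' : ¬ i = p := fun h => hp h.symm
    simp [Matrix.single, Matrix.diagonal_apply, hp, hp']

lemma stdBasisMatrix_mul_diagonal {a b : Type*} [Fintype a] [Fintype b]
    [DecidableEq a] [DecidableEq b] (d : b → ℝ) (i : a) (j : b) :
    Matrix.single i j (1 : ℝ) * Matrix.diagonal d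
      = d j • Matrix.single i j 1 := by
  ext p q
  rw [Matrix.mul_apply, Finset.sum_eq_single j
    (fun x _ hx => by simp [Matrix.single, Ne.symm hx]) (by simp)]
  by_cases hp : i = p <;> by_cases hj : j = q <;>
    simp [Matrix.single, Matrix.diagonal_apply, hp, hj, eq_comm]

noncomputable def conjEquiv {a b : Type*} [Fintype a] [Fintype b] [DecidableEq a] [DecidableEq b]
    (U : Matrix a a ℝ) (V : Matrix b b ℝ) (hU1 : U * star U = 1) (hU2 : star U * U = 1)
    (hV1 : V * star V = 1) (hV2 : star V * V = 1) :
    Matrix a b ℝ ≃ₗ[ℝ] Matrix a b ℝ := LinearEquiv.ofLinear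
  { toFun := fun M => U * M * star V
    map_add' := fun M N => by
      show U * (M + N) * star V = U * M * star V + U * N * star V
      rw [Matrix.mul_add, Matrix.add_mul]
    map_smul' := fun c M => by
      show U * (c • M) * star V = c • (U * M * star V)
      rw [Matrix.mul_smul, Matrix.smul_mul] }
  { toFun := fun M => star U * M * V
    map_add' := fun M N => by
      show star U * (M + N) * V = star U * M * V + star U * N * V
      rw [Matrix.mul_add, Matrix.add_mul]
    map_smul' := fun c M => by
      show star U * (c • M) * V = c • (star U * M * V)
      rw [Matrix.mul_smul, Matrix.smul_mul] }
  (by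
    apply LinearMap.ext
    intro M
    show U * (star U * M * V) * star V = M
    rw [← Matrix.mul_assoc, ← Matrix.mul_assoc, hU1, Matrix.one_mul, Matrix.mul_assoc,
      hV1, Matrix.mul_one])
  (by
    apply LinearMap.ext
    intro M
    show star U * (U * M * star V) * V = M
    rw [← Matrix.mul_assoc, ← Matrix.mul_assoc, hU2, Matrix.one_mul, Matrix.mul_assoc,
      hV2, Matrix.mul_one])

lemma conjEquiv_apply {a b : Type*} [Fintype a] [Fintype b] [DecidableEq a] [DecidableEq b]
    (U : Matrix a a ℝ) (V : Matrix b b ℝ) (hU1 : U * star U = 1) (hU2 : star U * U = 1)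
    (hV1 : V * star V = 1) (hV2 : star V * V = 1) (M : Matrix a b ℝ) :
    conjEquiv U V hU1 hU2 hV1 hV2 M = U * M * star V := rfl

end Stmt8Aux

open Stmt8Aux in
theorem stmt8 {m k n : ℕ}
    (L : Matrix (Fin m) (Fin k) ℝ) (R : Matrix (Fin k) (Fin n) ℝ)
    (T : Matrix (Fin m) (Fin k) ℝ × Matrix (Fin k) (Fin n) ℝ →ₗ[ℝ] Matrix (Fin m) (Fin n) ℝ)
    (hT : ∀ p, T p = p.1 * R + L * p.2)
    (Tstar : Matrix (Fin m) (Fin n) ℝ →ₗ[ℝ]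
      Matrix (Fin m) (Fin k) ℝ × Matrix (Fin k) (Fin n) ℝ)
    (hTstar : ∀ p B, finner (T p) B = finner p.1 (Tstar B).1 + finner p.2 (Tstar B).2) :
    ∀ t : ℝ,
      Module.finrank ℝ (Module.End.eigenspace (T ∘ₗ Tstar) t) =
        Nat.card {ij : Fin m × Fin n //
          sval L (ij.1.1 + 1) ^ 2 + sval R (ij.2.1 + 1) ^ 2 = t} := by
  intro t
  classical
  have hTs1 : ∀ B, (Tstar B).1 = B * Rᵀ := by
    intro B
    refine eq_of_finner_eq _ _ fun X => ?_
    have h := hTstar (X, (0 : Matrix (Fin k) (Fin n) ℝ)) B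
    rw [hT] at h
    simp only [Matrix.mul_zero, add_zero, finner_zero_left] at h
    rw [← h, finner_mul_right]
  have hTs2 : ∀ B, (Tstar B).2 = Lᵀ * B := by
    intro B
    refine eq_of_finner_eq _ _ fun Y => ?_
    have h := hTstar ((0 : Matrix (Fin m) (Fin k) ℝ), Y) B
    rw [hT] at h
    simp only [Matrix.zero_mul, zero_add, finner_zero_left] at h
    rw [← h, finner_mul_left]
  have hTT : ∀ B, (T ∘ₗ Tstar) B = (L * Lᴴ) * B + B * (Rᴴ * R) := by
    intro B
    rw [LinearMap.comp_apply, hT, hTs1, hTs2, real_conjT L, real_conjT R,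
      Matrix.mul_assoc B, ← Matrix.mul_assoc L, add_comm]
  set hP := Matrix.isHermitian_mul_conjTranspose_self L with hhP
  set hQ := Matrix.isHermitian_conjTranspose_mul_self R with hhQ
  set μ := hP.eigenvalues with hμdef
  set ν := hQ.eigenvalues with hνdef
  set U := (Matrix.IsHermitian.eigenvectorUnitary hP : Matrix (Fin m) (Fin m) ℝ) with hUdef
  set V := (Matrix.IsHermitian.eigenvectorUnitary hQ : Matrix (Fin n) (Fin n) ℝ) with hVdef
  have hU1 : U * star U = 1 :=
    Matrix.mem_unitaryGroup_iff.mp (Matrix.IsHermitian.eigenvectorUnitary hP).2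
  have hU2 : star U * U = 1 :=
    Matrix.mem_unitaryGroup_iff'.mp (Matrix.IsHermitian.eigenvectorUnitary hP).2
  have hV1 : V * star V = 1 :=
    Matrix.mem_unitaryGroup_iff.mp (Matrix.IsHermitian.eigenvectorUnitary hQ).2
  have hV2 : star V * V = 1 :=
    Matrix.mem_unitaryGroup_iff'.mp (Matrix.IsHermitian.eigenvectorUnitary hQ).2
  have hdiagP : Matrix.diagonal (RCLike.ofReal ∘ μ) = Matrix.diagonal μ := by
    rw [RCLike.ofReal_real_eq_id, Function.id_comp]
  have hdiagQ : Matrix.diagonal (RCLike.ofReal ∘ ν) = Matrix.diagonal ν := by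
    rw [RCLike.ofReal_real_eq_id, Function.id_comp]
  have hPU : (L * Lᴴ) * U = U * Matrix.diagonal μ := by
    conv_lhs => rw [hP.spectral_theorem]
    rw [hdiagP, Unitary.conjStarAlgAut_apply, ← hUdef, Matrix.mul_assoc (U * Matrix.diagonal μ) (star U) U, hU2, Matrix.mul_one]
  have hVQ : star V * (Rᴴ * R) = Matrix.diagonal ν * star V := by
    conv_lhs => rw [hQ.spectral_theorem]
    rw [hdiagQ, Unitary.conjStarAlgAut_apply, ← hVdef, ← Matrix.mul_assoc, ← Matrix.mul_assoc, hV2, Matrix.one_mul]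
  set Ψ := conjEquiv U V hU1 hU2 hV1 hV2 with hΨdef
  set bM := (Matrix.stdBasis ℝ (Fin m) (Fin n)).map Ψ with hbMdef
  have hbasis : ∀ x : Fin m × Fin n, (T ∘ₗ Tstar) (bM x) = (μ x.1 + ν x.2) • bM x := by
    rintro ⟨a, c⟩
    have hbx : bM (a, c) = U * Matrix.single a c (1 : ℝ) * star V := by
      rw [hbMdef, Basis.map_apply, Matrix.stdBasis_eq_single, hΨdef, conjEquiv_apply]
    rw [hbx, hTT]
    set E := Matrix.single a c (1 : ℝ) with hE
    have e1 : (L * Lᴴ) * (U * E * star V) = μ a • (U * E * star V) := by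
      rw [← Matrix.mul_assoc (L * Lᴴ) (U * E) (star V), ← Matrix.mul_assoc (L * Lᴴ) U E,
        hPU, Matrix.mul_assoc U (Matrix.diagonal μ) E, hE, diagonal_mul_stdBasisMatrix,
        Matrix.mul_smul, Matrix.smul_mul]
    have e2 : (U * E * star V) * (Rᴴ * R) = ν c • (U * E * star V) := by
      rw [Matrix.mul_assoc (U * E) (star V) (Rᴴ * R), hVQ,
        ← Matrix.mul_assoc (U * E) (Matrix.diagonal ν) (star V),
        Matrix.mul_assoc U E (Matrix.diagonal ν), hE, stdBasisMatrix_mul_diagonal,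
        Matrix.mul_smul, Matrix.smul_mul]
    rw [e1, e2, ← add_smul]
  have hLHS := finrank_eigenspace_of_basis bM (fun x => μ x.1 + ν x.2) (T ∘ₗ Tstar) hbasis t
  rw [hLHS]
  obtain ⟨σp, hσp⟩ := exists_antitone_perm μ
  obtain ⟨τp, hτp⟩ := exists_antitone_perm ν
  have hsvL : ∀ i : Fin m, sval L ((i : ℕ) + 1) ^ 2 = μ (σp i) := by
    intro i
    rw [sval_CFc L σp hσp i,
      Real.sq_sqrt (Matrix.eigenvalues_self_mul_conjTranspose_nonneg L _)]
  have hsvR : ∀ j : Fin n, sval R ((j : ℕ) + 1) ^ 2 = ν (τp j) := by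
    intro j
    rw [sval_CFd R τp hτp j,
      Real.sq_sqrt (Matrix.eigenvalues_conjTranspose_mul_self_nonneg R _)]
  refine (Nat.card_congr (Equiv.subtypeEquiv (Equiv.prodCongr σp τp) fun ij => ?_)).symm
  obtain ⟨i, j⟩ := ij
  simp only [Equiv.prodCongr_apply, Prod.map]
  rw [hsvL i, hsvR j]
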